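/- Let Z, P ⊆ Q[X] with Z a Gröbner basis and every element of P reduced with respect to Z (for a fixed monomial order ⪯). If q ∈ ideal(Z) + cone(P) is written q = z + p with z ∈ ideal(Z) and p ∈ cone(P), then LM(z) ⪯ LM(q) and LM(p) ⪯ LM(q) (whenever z, p are nonzero). -/
import Mathlib


open MvPolynomial

/-- `cone(P)`: the set of finite nonnegative rational combinations of elements of `P`. -/
def coneGen {σ : Type} (P : Set (MvPolynomial σ ℚ)) : Set (MvPolynomial σ ℚ) :=
  {q | ∃ (s : Finset (MvPolynomial σ ℚ)) (c : MvPolynomial σ ℚ → ℚ),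
      (↑s : Set (MvPolynomial σ ℚ)) ⊆ P ∧ (∀ p ∈ s, 0 ≤ c p) ∧ q = ∑ p ∈ s, c p • p}

/-- decomposition lemma: fix a monomial order `mo` on monomials `σ →₀ ℕ`
(a linear order, compatible with multiplication of monomials, with `1` least), and let
`lm p` be the leading monomial of a nonzero polynomial `p`.  Let `Z` be a Gröbner basis
(every nonzero member of `ideal(Z)` has leading monomial divisible by the leading monomial
of some nonzero `g ∈ Z`) and let every `p ∈ P` be reduced w.r.t. `Z` (no monomial of `p`
divisible by `lm g`, `g ∈ Z`).  If `q ∈ ideal(Z) + cone(P)` is written `q = z + p` with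
`z ∈ ideal(Z)` and `p ∈ cone(P)`, then `lm z ⪯ lm q` and `lm p ⪯ lm q`
(whenever `z`, `p` are nonzero). -/
theorem decomposition_lemma {σ : Type} [Fintype σ]
    (mo : (σ →₀ ℕ) → (σ →₀ ℕ) → Prop)
    (mo_total : ∀ m n, mo m n ∨ mo n m)
    (mo_antisymm : ∀ m n, mo m n → mo n m → m = n)
    (mo_trans : ∀ m n k, mo m n → mo n k → mo m k)
    (mo_add : ∀ m n k, mo m n → mo (m + k) (n + k))
    (mo_bot : ∀ m, mo 0 m)
    (lm : MvPolynomial σ ℚ → (σ →₀ ℕ))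
    (hlm : ∀ p : MvPolynomial σ ℚ, p ≠ 0 →
      lm p ∈ p.support ∧ ∀ m ∈ p.support, mo m (lm p))
    (Z P : Set (MvPolynomial σ ℚ))
    (hGB : ∀ q ∈ Ideal.span Z, q ≠ 0 → ∃ g ∈ Z, g ≠ 0 ∧ ∃ d, lm q = lm g + d)
    (hPred : ∀ p ∈ P, ∀ m ∈ p.support, ∀ g ∈ Z, g ≠ 0 → ¬ ∃ d, m = lm g + d) :
    ∀ (q z p : MvPolynomial σ ℚ), z ∈ Ideal.span Z → p ∈ coneGen P → q = z + p →
      (z ≠ 0 → mo (lm z) (lm q)) ∧ (p ≠ 0 → mo (lm p) (lm q)) := by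
  intro q z p hz hp hq
  obtain ⟨s, c, hsP, _, hpeq⟩ := hp
  have key : ∀ m : σ →₀ ℕ, (∃ g ∈ Z, g ≠ 0 ∧ ∃ d, m = lm g + d) →
      MvPolynomial.coeff m p = 0 := by
    rintro m ⟨g, hgZ, hg0, d, hd⟩
    subst hpeq
    rw [MvPolynomial.coeff_sum]
    apply Finset.sum_eq_zero
    intro i hi
    have hi0 : MvPolynomial.coeff m i = 0 := by
      by_contra h
      exact hPred i (hsP hi) m (MvPolynomial.mem_support_iff.mpr h) g hgZ hg0 ⟨d, hd⟩
    rw [MvPolynomial.coeff_smul, hi0, smul_zero]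
  have hzpart : z ≠ 0 → mo (lm z) (lm q) := by
    intro hz0
    have h1 := hlm z hz0
    have hczm : MvPolynomial.coeff (lm z) z ≠ 0 := MvPolynomial.mem_support_iff.mp h1.1
    have hcp : MvPolynomial.coeff (lm z) p = 0 := key _ (hGB z hz hz0)
    have hcq : MvPolynomial.coeff (lm z) q ≠ 0 := by
      rw [hq, MvPolynomial.coeff_add, hcp, add_zero]; exact hczm
    have hq0 : q ≠ 0 := fun h => hcq (by simp [h])
    exact (hlm q hq0).2 _ (MvPolynomial.mem_support_iff.mpr hcq)
  refine ⟨hzpart, ?_⟩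
  intro hp0
  have h1 := hlm p hp0
  have hcpm : MvPolynomial.coeff (lm p) p ≠ 0 := MvPolynomial.mem_support_iff.mp h1.1
  by_cases hcq : MvPolynomial.coeff (lm p) q = 0
  · have hcz : MvPolynomial.coeff (lm p) z ≠ 0 := by
      intro h
      apply hcpm
      have := hcq
      rw [hq, MvPolynomial.coeff_add, h, zero_add] at this
      exact this
    have hz0 : z ≠ 0 := fun h => hcz (by simp [h])
    exact mo_trans _ _ _ ((hlm z hz0).2 _ (MvPolynomial.mem_support_iff.mpr hcz))
      (hzpart hz0)
  · have hq0 : q ≠ 0 := fun h => hcq (by simp [h])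
    exact (hlm q hq0).2 _ (MvPolynomial.mem_support_iff.mpr hcq)
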